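/- Let ψ ∈ Ω∞ and let κ₁, κ₂ : [0,∞) → [0,∞) be increasing, continuous, unbounded functions with κ_i(t) > 0 for t > 0, such that κ₁ − κ₂ is bounded. Then f_{L,κ₁}(x) = f_{L,κ₂}(x) for every Banach limit L ∈ BL(ℝ₊) and every x ∈ M₊(ψ), and likewise f_{L',κ₁}(x) = f_{L',κ₂}(x) for every Banach limit L' ∈ BL(ℕ) and every x ∈ M₊(ψ). -/

import Mathlib

open MeasureTheory Filter Set

noncomputable section

/-- `f` is bounded and continuous on `[0,∞)`, i.e. (the restriction of) `f`
belongs to `C_b([0,∞))`. -/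
def IsCb (f : ℝ → ℝ) : Prop :=
  ContinuousOn f (Ici 0) ∧ ∃ M : ℝ, ∀ t ∈ Ici (0:ℝ), |f t| ≤ M

/-- Bounded real sequences, i.e. elements of `ℓ∞(ℕ)`. -/
def IsBddSeq (a : ℕ → ℝ) : Prop := ∃ M : ℝ, ∀ n, |a n| ≤ M

/-- A Banach limit on `C_b([0,∞))`: a positive linear translation-invariant
functional with `L(1) = 1`.  (The underlying map is defined on all of `ℝ → ℝ`;
the axioms only refer to its values on bounded continuous functions on `[0,∞)`.) -/
structure BanachLimitR where
  toFun : (ℝ → ℝ) → ℝ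
  map_add : ∀ f g : ℝ → ℝ, IsCb f → IsCb g →
    toFun (fun t => f t + g t) = toFun f + toFun g
  map_smul : ∀ (c : ℝ) (f : ℝ → ℝ), IsCb f → toFun (fun t => c * f t) = c * toFun f
  pos : ∀ f : ℝ → ℝ, IsCb f → (∀ t ∈ Ici (0:ℝ), 0 ≤ f t) → 0 ≤ toFun f
  map_one : toFun (fun _ => 1) = 1
  shift_inv : ∀ f : ℝ → ℝ, IsCb f → ∀ s : ℝ, 0 ≤ s → toFun (fun t => f (t + s)) = toFun f

/-- A Banach limit on `ℓ∞(ℕ)`: a positive linear shift-invariant functional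
with `L'(1) = 1`. -/
structure BanachLimitN where
  toFun : (ℕ → ℝ) → ℝ
  map_add : ∀ a b : ℕ → ℝ, IsBddSeq a → IsBddSeq b →
    toFun (fun n => a n + b n) = toFun a + toFun b
  map_smul : ∀ (c : ℝ) (a : ℕ → ℝ), IsBddSeq a → toFun (fun n => c * a n) = c * toFun a
  pos : ∀ a : ℕ → ℝ, IsBddSeq a → (∀ n, 0 ≤ a n) → 0 ≤ toFun a
  map_one : toFun (fun _ => 1) = 1
  shift_inv : ∀ a : ℕ → ℝ, IsBddSeq a → toFun (fun n => a (n + 1)) = toFun a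

/-- An element of `SC_b^*([0,∞))`: a positive linear functional on `C_b([0,∞))`
with `γ(1) = 1` vanishing on `C₀([0,∞))`. -/
structure SCbStar where
  toFun : (ℝ → ℝ) → ℝ
  map_add : ∀ f g : ℝ → ℝ, IsCb f → IsCb g →
    toFun (fun t => f t + g t) = toFun f + toFun g
  map_smul : ∀ (c : ℝ) (f : ℝ → ℝ), IsCb f → toFun (fun t => c * f t) = c * toFun f
  pos : ∀ f : ℝ → ℝ, IsCb f → (∀ t ∈ Ici (0:ℝ), 0 ≤ f t) → 0 ≤ toFun f
  map_one : toFun (fun _ => 1) = 1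
  vanish : ∀ f : ℝ → ℝ, IsCb f → Tendsto f atTop (nhds 0) → toFun f = 0

/-- A positive linear functional on `C_b([0,∞))`. -/
structure PosLinFunc where
  toFun : (ℝ → ℝ) → ℝ
  map_add : ∀ f g : ℝ → ℝ, IsCb f → IsCb g →
    toFun (fun t => f t + g t) = toFun f + toFun g
  map_smul : ∀ (c : ℝ) (f : ℝ → ℝ), IsCb f → toFun (fun t => c * f t) = c * toFun f
  pos : ∀ f : ℝ → ℝ, IsCb f → (∀ t ∈ Ici (0:ℝ), 0 ≤ f t) → 0 ≤ toFun f

/-- `ψ ∈ Ω_∞`: concave on `[0,∞)`, nonnegative, `ψ(t) → 0` as `t → 0⁺` and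
`ψ(t) → ∞` as `t → ∞`. -/
def OmegaInf (ψ : ℝ → ℝ) : Prop :=
  ConcaveOn ℝ (Ici 0) ψ ∧ (∀ t ∈ Ici (0:ℝ), 0 ≤ ψ t) ∧
    Tendsto ψ (nhdsWithin 0 (Ioi 0)) (nhds 0) ∧ Tendsto ψ atTop atTop

/-- The decreasing rearrangement `x*` of a measurable function `x` on `[0,∞)`. -/
def decRearr (x : ℝ → ℝ) (t : ℝ) : ℝ :=
  sInf {s : ℝ | 0 ≤ s ∧ volume {u : ℝ | 0 ≤ u ∧ s < |x u|} ≤ ENNReal.ofReal t}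

/-- The weighted mean function `φ(x)(t) = (1/ψ(t)) ∫₀ᵗ x*(s) ds`. -/
def phiW (ψ x : ℝ → ℝ) (t : ℝ) : ℝ := (∫ s in (0:ℝ)..t, decRearr x s) / ψ t

/-- Membership in the Marcinkiewicz space `M(ψ)`. -/
def MemM (ψ x : ℝ → ℝ) : Prop :=
  Measurable x ∧ ∃ M : ℝ, ∀ t > (0:ℝ), phiW ψ x t ≤ M

/-- Membership in the positive cone `M₊(ψ)`. -/
def MemMplus (ψ x : ℝ → ℝ) : Prop := MemM ψ x ∧ ∀ t ∈ Ici (0:ℝ), 0 ≤ x t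

/-- The Marcinkiewicz norm `‖x‖_{M(ψ)} = sup_{t>0} φ(x)(t)`. -/
def MNorm (ψ x : ℝ → ℝ) : ℝ := ⨆ t > (0:ℝ), phiW ψ x t

/-- `κ ∈ 𝒦`: strictly increasing, invertible (as a map of `[0,∞)` onto itself),
differentiable, unbounded, with `κ(0) = 0`. -/
def MemK (κ : ℝ → ℝ) : Prop :=
  StrictMonoOn κ (Ici 0) ∧ κ 0 = 0 ∧ MapsTo κ (Ici 0) (Ici 0) ∧
    SurjOn κ (Ici 0) (Ici 0) ∧ DifferentiableOn ℝ κ (Ici 0) ∧ Tendsto κ atTop atTop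

/-- `f_{L,κ}(x) = L(φ_κ(x))` for a Banach limit `L` on `C_b([0,∞))`; the function
`φ_κ(x)`, bounded and continuous on `(0,∞)`, is fed to `L` as `t ↦ φ_κ(x)(max t 1)`. -/
def fL (L : BanachLimitR) (ψ κ x : ℝ → ℝ) : ℝ :=
  L.toFun fun t => phiW ψ x (κ (max t 1))

/-- `f_{L',κ}(x) = L'({φ(x)(κ(n))}ₙ)` for a Banach limit `L'` on `ℓ∞(ℕ)`. -/
def fLN (L' : BanachLimitN) (ψ κ x : ℝ → ℝ) : ℝ :=
  L'.toFun fun n => phiW ψ x (κ n)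

/-- `κ` has restricted growth with respect to `ψ` (`κ ∈ R(ψ)`): the sequence
`ψ(κ(n))/ψ(κ(n+1))` is almost convergent to `1`. -/
def RestrictedGrowth (ψ κ : ℝ → ℝ) : Prop :=
  ∀ L' : BanachLimitN, L'.toFun (fun n => ψ (κ n) / ψ (κ ((n:ℝ) + 1))) = 1

/-- `κ` has dominated growth with respect to `ψ` (`κ ∈ D(ψ)`):
`(ψ∘κ)'(t)/(ψ∘κ)(t) < C/t` for some `C > 0` and all `t > 0`. -/
def DominatedGrowth (ψ κ : ℝ → ℝ) : Prop :=
  (∀ t > (0:ℝ), DifferentiableAt ℝ (fun u => ψ (κ u)) t) ∧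
    ∃ C > (0:ℝ), ∀ t > (0:ℝ), deriv (fun u => ψ (κ u)) t / ψ (κ t) < C / t

/-- `κ` is of exponential increase: `κ(t + C) > 2κ(t)` for some `C > 0` and all `t > 0`. -/
def ExpIncrease (κ : ℝ → ℝ) : Prop := ∃ C > (0:ℝ), ∀ t > (0:ℝ), 2 * κ t < κ (t + C)

/-- The piecewise linear extension map `p : ℓ∞(ℕ) → C_b([0,∞))`. -/
def plExt (a : ℕ → ℝ) (t : ℝ) : ℝ :=
  a ⌊t⌋₊ + (a (⌊t⌋₊ + 1) - a ⌊t⌋₊) * (t - (⌊t⌋₊ : ℝ))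

/-- The Cesàro mean `C(g)(μ) = (1/μ) ∫₀^μ g(s) ds` (with `C(g)(0) := g(0)`). -/
def cesaro (g : ℝ → ℝ) (μ : ℝ) : ℝ :=
  if μ = 0 then g 0 else (∫ s in (0:ℝ)..μ, g s) / μ

/-- `M_k(g)(λ) = (1/k(λ)) ∫₀^λ g(s) k'(s) ds` (with `M_k(g)(0) := g(0)`). -/
def MkFun (k g : ℝ → ℝ) (l : ℝ) : ℝ :=
  if l = 0 then g 0 else (∫ s in (0:ℝ)..l, g s * deriv k s) / k l

/-- The Connes-Dixmier functional `τ_{γ,k}(x) = γ(M_k(φ(x)))`; the function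
`M_k(φ(x))`, bounded and continuous on `(0,∞)`, is fed to `γ` as `t ↦ M_k(φ(x))(max t 1)`. -/
def tauCD (γ : SCbStar) (ψ k x : ℝ → ℝ) : ℝ :=
  γ.toFun fun t => MkFun k (phiW ψ x) (max t 1)

/-- A set `Λ` of Banach limits has the Cesàro limit property if for each
`g ∈ C_b([0,∞))` both `liminf C(g)` and `limsup C(g)` are attained as values `L(g)`, `L ∈ Λ`. -/
def CesaroLimitProp (Λ : Set BanachLimitR) : Prop :=
  ∀ g : ℝ → ℝ, IsCb g →
    (∃ L ∈ Λ, L.toFun g = liminf (cesaro g) atTop) ∧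
    (∃ L ∈ Λ, L.toFun g = limsup (cesaro g) atTop)

/-- Dilation invariance of an element of `SC_b^*([0,∞))`. -/
def DilationInvariant (ω : SCbStar) : Prop :=
  ∀ g : ℝ → ℝ, IsCb g → ∀ a : ℝ, 0 < a → ω.toFun (fun t => g (a * t)) = ω.toFun g

/-! ### Auxiliary lemmas -/

section AuxLemmas

/-- The level-set family used in `decRearr`. -/
def Sset (x : ℝ → ℝ) (t : ℝ) : Set ℝ :=
  {s : ℝ | 0 ≤ s ∧ volume {u : ℝ | 0 ≤ u ∧ s < |x u|} ≤ ENNReal.ofReal t}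

lemma decRearr_eq_sInf (x : ℝ → ℝ) (t : ℝ) : decRearr x t = sInf (Sset x t) := rfl

lemma Sset_mono (x : ℝ → ℝ) {t t' : ℝ} (h : t ≤ t') : Sset x t ⊆ Sset x t' :=
  fun s hs => ⟨hs.1, hs.2.trans (ENNReal.ofReal_le_ofReal h)⟩

lemma Sset_bddBelow (x : ℝ → ℝ) (t : ℝ) : BddBelow (Sset x t) :=
  ⟨0, fun s hs => hs.1⟩

lemma decRearr_nonneg (x : ℝ → ℝ) (t : ℝ) : 0 ≤ decRearr x t :=
  Real.sInf_nonneg fun s hs => hs.1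

lemma decRearr_nonpos_eq (x : ℝ → ℝ) {t : ℝ} (h : t ≤ 0) :
    decRearr x t = decRearr x 0 := by
  have : ENNReal.ofReal t = ENNReal.ofReal 0 := by
    rw [ENNReal.ofReal_zero, ENNReal.ofReal_eq_zero]; exact h
  unfold decRearr
  rw [this]

lemma decRearr_antitoneOn (x : ℝ → ℝ) {s₀ : ℝ} (h : (Sset x s₀).Nonempty) :
    AntitoneOn (decRearr x) (Ici s₀) := by
  intro a ha b hb hab
  have hnea : (Sset x a).Nonempty := h.mono (Sset_mono x ha)
  exact csInf_le_csInf (Sset_bddBelow x b) hnea (Sset_mono x hab)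

lemma exists_base (x : ℝ → ℝ) :
    ∃ s₀ : ℝ, 0 ≤ s₀ ∧ AntitoneOn (decRearr x) (Ici s₀) := by
  by_cases h : ∃ t : ℝ, 0 ≤ t ∧ (Sset x t).Nonempty
  · obtain ⟨t, ht0, htne⟩ := h
    exact ⟨t, ht0, decRearr_antitoneOn x htne⟩
  · push_neg at h
    refine ⟨0, le_rfl, ?_⟩
    have hz : ∀ t : ℝ, 0 ≤ t → decRearr x t = 0 := by
      intro t ht
      rw [decRearr_eq_sInf, h t ht, Real.sInf_empty]
    intro a ha b hb _
    rw [hz a ha, hz b hb]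

lemma II_neg (x : ℝ → ℝ) {a : ℝ} (ha : a ≤ 0) :
    IntervalIntegrable (decRearr x) volume a 0 := by
  have hc : IntervalIntegrable (fun _ : ℝ => decRearr x 0) volume a 0 :=
    intervalIntegrable_const
  refine hc.congr_ae ?_
  filter_upwards [MeasureTheory.self_mem_ae_restrict (measurableSet_uIoc :
    MeasurableSet (Set.uIoc a 0))] with s hs
  have hs0 : s ≤ 0 := by
    rcases Set.mem_uIoc.1 hs with h' | h'
    · exact h'.2
    · exact h'.2.trans ha
  exact (decRearr_nonpos_eq x hs0).symm

/-- Concavity slope estimate: for `0 < s ≤ t`, `ψ t ≤ (t/s) * ψ s`. -/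
lemma psi_ratio {ψ : ℝ → ℝ} (hconc : ConcaveOn ℝ (Ici 0) ψ)
    (hnn : ∀ t ∈ Ici (0:ℝ), 0 ≤ ψ t) {s t : ℝ} (hs : 0 < s) (hst : s ≤ t) :
    ψ t ≤ (t / s) * ψ s := by
  have ht : 0 < t := hs.trans_le hst
  have hst1 : s / t ≤ 1 := (div_le_one ht).2 hst
  have key : (1 - s / t) • ψ 0 + (s / t) • ψ t ≤ ψ ((1 - s / t) • (0:ℝ) + (s / t) • t) :=
    hconc.2 (Set.self_mem_Ici) (Set.mem_Ici.2 ht.le)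
      (by linarith) (by positivity) (by ring)
  have harg : (1 - s / t) • (0:ℝ) + (s / t) • t = s := by
    simp only [smul_eq_mul, mul_zero, zero_add]
    field_simp
  rw [harg] at key
  simp only [smul_eq_mul] at key
  have h0 : 0 ≤ (1 - s / t) * ψ 0 := by
    have := hnn 0 Set.self_mem_Ici
    nlinarith
  have hst' : s / t * ψ t ≤ ψ s := by linarith
  have hts : 0 < t / s := div_pos ht hs
  have := mul_le_mul_of_nonneg_left hst' hts.le
  have heq : t / s * (s / t * ψ t) = ψ t := by
    field_simp
  linarith [heq ▸ this]

lemma psi_pos {ψ : ℝ → ℝ} (hψ : OmegaInf ψ) {t : ℝ} (ht : 0 < t) : 0 < ψ t := by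
  obtain ⟨hconc, hnn, _, hinf⟩ := hψ
  obtain ⟨T, hT1, hTt⟩ :=
    ((hinf.eventually (eventually_ge_atTop (1:ℝ))).and (eventually_ge_atTop t)).exists
  by_contra h
  push_neg at h
  have hr := psi_ratio hconc hnn ht hTt
  have : (T / t) * ψ t ≤ 0 :=
    mul_nonpos_of_nonneg_of_nonpos (div_nonneg (by linarith) ht.le) h
  linarith

lemma psi_mono {ψ : ℝ → ℝ} (hψ : OmegaInf ψ) {s t : ℝ} (hs : 0 < s) (hst : s ≤ t) :
    ψ s ≤ ψ t := by
  obtain ⟨hconc, hnn, _, hinf⟩ := hψ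
  have ht : 0 < t := hs.trans_le hst
  obtain ⟨T, hT1, hTt⟩ :=
    ((hinf.eventually (eventually_ge_atTop (ψ s))).and (eventually_gt_atTop t)).exists
  have hTs : s < T := hst.trans_lt hTt
  set a : ℝ := (T - t) / (T - s) with ha_def
  set b : ℝ := (t - s) / (T - s) with hb_def
  have hTspos : 0 < T - s := by linarith
  have ha0 : 0 ≤ a := div_nonneg (by linarith) hTspos.le
  have hb0 : 0 ≤ b := div_nonneg (by linarith) hTspos.le
  have hab : a + b = 1 := by
    rw [ha_def, hb_def, ← add_div, div_eq_one_iff_eq hTspos.ne']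
    ring
  have key : a • ψ s + b • ψ T ≤ ψ (a • s + b • T) :=
    hconc.2 hs.le (hs.trans (hst.trans_lt hTt)).le ha0 hb0 hab
  have harg : a • s + b • T = t := by
    simp only [smul_eq_mul, ha_def, hb_def]
    field_simp
    ring
  rw [harg] at key
  simp only [smul_eq_mul] at key
  have h3 : a * ψ s + b * ψ s = ψ s := by rw [← add_mul, hab, one_mul]
  nlinarith [mul_le_mul_of_nonneg_left hT1 hb0]

lemma II_all_of_II_pos (x : ℝ → ℝ)
    (h : ∀ t > (0:ℝ), IntervalIntegrable (decRearr x) volume 0 t) :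
    ∀ a b : ℝ, IntervalIntegrable (decRearr x) volume a b := by
  have h0 : ∀ t : ℝ, IntervalIntegrable (decRearr x) volume 0 t := by
    intro t
    rcases lt_trichotomy t 0 with ht | rfl | ht
    · exact (II_neg x ht.le).symm
    · exact IntervalIntegrable.refl
    · exact h t ht
  exact fun a b => (h0 a).symm.trans (h0 b)

lemma dichotomy (x : ℝ → ℝ) :
    (∀ a b : ℝ, IntervalIntegrable (decRearr x) volume a b) ∨
    (∀ t > (0:ℝ), (∫ s in (0:ℝ)..t, decRearr x s) = 0) := by
  by_cases hall : ∀ t > (0:ℝ), IntervalIntegrable (decRearr x) volume 0 t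
  · exact Or.inl (II_all_of_II_pos x hall)
  · push_neg at hall
    obtain ⟨t₁, ht₁, hnt₁⟩ := hall
    right
    intro t ht
    by_cases hII : IntervalIntegrable (decRearr x) volume 0 t
    · have htt₁ : t < t₁ := by
        by_contra hge
        push_neg at hge
        exact hnt₁ (hII.mono_set (by
          rw [uIcc_of_le ht₁.le, uIcc_of_le ht.le]
          exact Icc_subset_Icc le_rfl hge))
      have hempty : ∀ s ∈ Ioo (0:ℝ) t, Sset x s = ∅ := by
        intro s hs
        by_contra hne
        have hne' : (Sset x s).Nonempty := Set.nonempty_iff_ne_empty.2 hne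
        have hanti := decRearr_antitoneOn x hne'
        have hII1 : IntervalIntegrable (decRearr x) volume 0 s :=
          hII.mono_set (by
            rw [uIcc_of_le ht.le, uIcc_of_le hs.1.le]
            exact Icc_subset_Icc le_rfl hs.2.le)
        have hst₁ : s ≤ t₁ := hs.2.le.trans htt₁.le
        have hII2 : IntervalIntegrable (decRearr x) volume s t₁ :=
          AntitoneOn.intervalIntegrable (hanti.mono (by
            rw [uIcc_of_le hst₁]
            exact Icc_subset_Ici_self))
        exact hnt₁ (hII1.trans hII2)
      have hae : ∀ᵐ u : ℝ, u ≠ t := by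
        rw [MeasureTheory.ae_iff]
        simp
      apply intervalIntegral.integral_zero_ae
      filter_upwards [hae] with u hu hmem
      have hu' : u ∈ Ioc 0 t := by rwa [uIoc_of_le ht.le] at hmem
      have hIoo : u ∈ Ioo 0 t := ⟨hu'.1, lt_of_le_of_ne hu'.2 hu⟩
      rw [decRearr_eq_sInf, hempty u hIoo, Real.sInf_empty]
    · exact intervalIntegral.integral_undef hII

lemma phiW_cont (ψ x : ℝ → ℝ) (hψ : OmegaInf ψ) :
    ContinuousOn (phiW ψ x) (Ioi 0) := by
  have hψc : ContinuousOn ψ (Ioi 0) := by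
    have := hψ.1.continuousOn_interior
    rwa [interior_Ici] at this
  rcases dichotomy x with hall | hzero
  · have hF : Continuous (fun t => ∫ s in (0:ℝ)..t, decRearr x s) :=
      intervalIntegral.continuous_primitive hall 0
    exact hF.continuousOn.div hψc fun t ht => (psi_pos hψ ht).ne'
  · have heq : EqOn (phiW ψ x) (fun _ => (0:ℝ)) (Ioi 0) := fun t ht => by
      simp [phiW, hzero t ht]
    exact (continuousOn_const (c := (0:ℝ))).congr heq

lemma phiW_bounds (ψ x : ℝ → ℝ) (hψ : OmegaInf ψ) (hx : MemMplus ψ x) :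
    ∃ M : ℝ, 0 ≤ M ∧ ∀ t > (0:ℝ), 0 ≤ phiW ψ x t ∧ phiW ψ x t ≤ M := by
  obtain ⟨⟨_, M, hM⟩, _⟩ := hx
  have hnn : ∀ t > (0:ℝ), 0 ≤ phiW ψ x t := fun t ht =>
    div_nonneg (intervalIntegral.integral_nonneg ht.le fun u _ => decRearr_nonneg x u)
      (psi_pos hψ ht).le
  exact ⟨M, le_trans (hnn 1 one_pos) (hM 1 one_pos), fun t ht => ⟨hnn t ht, hM t ht⟩⟩

lemma phiW_diff_bound (ψ x : ℝ → ℝ) (hψ : OmegaInf ψ)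
    (hall : ∀ a b : ℝ, IntervalIntegrable (decRearr x) volume a b)
    {s₀ M B : ℝ} (hanti : AntitoneOn (decRearr x) (Ici s₀))
    (hM : ∀ t > (0:ℝ), phiW ψ x t ≤ M) (hB : 0 ≤ B)
    {a b : ℝ} (hb : 0 < b) (h2s : 2 * s₀ ≤ b) (hba : b ≤ a) (haB : a ≤ b + B) :
    |phiW ψ x a - phiW ψ x b| ≤ 2 * M * B / b := by
  have ha : 0 < a := hb.trans_le hba
  have hψb := psi_pos hψ hb
  have hψa := psi_pos hψ ha
  have hψab : ψ b ≤ ψ a := psi_mono hψ hb hba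
  have hFb0 : 0 ≤ (∫ s in (0:ℝ)..b, decRearr x s) :=
    intervalIntegral.integral_nonneg hb.le fun u _ => decRearr_nonneg x u
  have hFbM : (∫ s in (0:ℝ)..b, decRearr x s) ≤ M * ψ b := by
    have h := hM b hb
    rwa [phiW, div_le_iff₀ hψb] at h
  have hM0 : 0 ≤ M := by
    have h1 : 0 ≤ phiW ψ x b := div_nonneg hFb0 hψb.le
    linarith [hM b hb]
  have hs₀b2 : s₀ ≤ b / 2 := by linarith
  have hbmem : b ∈ Ici s₀ := mem_Ici.2 (by linarith)
  have hamem : a ∈ Ici s₀ := mem_Ici.2 (by linarith)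
  have hgb0 : 0 ≤ decRearr x b := decRearr_nonneg x b
  -- bound on `g b`
  have hgb : decRearr x b * (b / 2) ≤ (∫ s in (0:ℝ)..b, decRearr x s) := by
    have h1 : ∫ s in (b/2)..b, (fun _ : ℝ => decRearr x b) s ≤ ∫ s in (b/2)..b, decRearr x s :=
      intervalIntegral.integral_mono_on (by linarith) intervalIntegrable_const (hall _ _)
        (fun s hs => hanti (mem_Ici.2 (le_trans hs₀b2 hs.1)) hbmem hs.2)
    rw [intervalIntegral.integral_const] at h1
    have h2 : (∫ s in (0:ℝ)..b, decRearr x s)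
        = (∫ s in (0:ℝ)..(b/2), decRearr x s) + ∫ s in (b/2)..b, decRearr x s :=
      (intervalIntegral.integral_add_adjacent_intervals (hall _ _) (hall _ _)).symm
    have h3 : 0 ≤ ∫ s in (0:ℝ)..(b/2), decRearr x s :=
      intervalIntegral.integral_nonneg (by linarith) fun u _ => decRearr_nonneg x u
    have h4 : (b - b/2) • decRearr x b = decRearr x b * (b/2) := by
      rw [smul_eq_mul]; ring
    rw [h4] at h1
    linarith
  have hgb2 : decRearr x b ≤ 2 * (M * ψ b) / b := by
    rw [le_div_iff₀ hb]
    nlinarith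
  have hFsplit : (∫ s in (0:ℝ)..a, decRearr x s)
      = (∫ s in (0:ℝ)..b, decRearr x s) + ∫ s in b..a, decRearr x s :=
    (intervalIntegral.integral_add_adjacent_intervals (hall _ _) (hall _ _)).symm
  have hFab : (∫ s in (0:ℝ)..a, decRearr x s) - (∫ s in (0:ℝ)..b, decRearr x s)
      ≤ B * decRearr x b := by
    have h1 : ∫ s in b..a, decRearr x s ≤ ∫ s in b..a, (fun _ : ℝ => decRearr x b) s :=
      intervalIntegral.integral_mono_on hba (hall _ _) intervalIntegrable_const
        (fun s hs => hanti hbmem (mem_Ici.2 (le_trans (mem_Ici.1 hbmem) hs.1)) hs.1)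
    rw [intervalIntegral.integral_const, smul_eq_mul] at h1
    nlinarith
  have hFba : (∫ s in (0:ℝ)..b, decRearr x s) ≤ (∫ s in (0:ℝ)..a, decRearr x s) := by
    have h3 : 0 ≤ ∫ s in b..a, decRearr x s :=
      intervalIntegral.integral_nonneg hba fun u _ => decRearr_nonneg x u
    linarith
  have h2MB : 0 ≤ 2 * M * B := by nlinarith
  rw [abs_sub_le_iff]
  simp only [phiW]
  set Fa : ℝ := ∫ s in (0:ℝ)..a, decRearr x s with hFa
  set Fb : ℝ := ∫ s in (0:ℝ)..b, decRearr x s with hFbdef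
  constructor
  · have h1 : Fb / ψ a ≤ Fb / ψ b :=
      (div_le_div_iff₀ hψa hψb).2 (mul_le_mul_of_nonneg_left hψab hFb0)
    have h2 : (Fa - Fb) / ψ a ≤ (B * decRearr x b) / ψ a :=
      (div_le_div_iff_of_pos_right hψa).2 hFab
    have h3 : (B * decRearr x b) / ψ a ≤ (B * (2 * (M * ψ b) / b)) / ψ a :=
      (div_le_div_iff_of_pos_right hψa).2 (mul_le_mul_of_nonneg_left hgb2 hB)
    have h4 : (B * (2 * (M * ψ b) / b)) / ψ a = (2 * M * B / b) * (ψ b / ψ a) := by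
      field_simp
    have h5 : (2 * M * B / b) * (ψ b / ψ a) ≤ (2 * M * B / b) * 1 :=
      mul_le_mul_of_nonneg_left ((div_le_one hψa).2 hψab) (div_nonneg h2MB hb.le)
    have h6 : (Fa - Fb) / ψ a = Fa / ψ a - Fb / ψ a := sub_div _ _ _
    rw [h4] at h3
    rw [mul_one] at h5
    linarith
  · have h2 : Fb / ψ a ≤ Fa / ψ a := (div_le_div_iff_of_pos_right hψa).2 hFba
    have hψdiff : ψ a - ψ b ≤ (B / b) * ψ b := by
      have hr := psi_ratio hψ.1 hψ.2.1 hb hba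
      have he : (a / b) * ψ b - ψ b = ((a - b) / b) * ψ b := by
        field_simp
      have h4 : (a - b) / b ≤ B / b := (div_le_div_iff_of_pos_right hb).2 (by linarith)
      nlinarith [mul_le_mul_of_nonneg_right h4 (hψ.2.1 b (le_of_lt hb))]
    have h3 : Fb / ψ b - Fb / ψ a = Fb * (ψ a - ψ b) / (ψ b * ψ a) := by
      field_simp
    have h4 : Fb * (ψ a - ψ b) ≤ (M * ψ b) * ((B / b) * ψ b) :=
      mul_le_mul hFbM hψdiff (sub_nonneg.2 hψab) (mul_nonneg hM0 hψb.le)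
    have h5 : Fb * (ψ a - ψ b) / (ψ b * ψ a) ≤ (M * ψ b) * ((B / b) * ψ b) / (ψ b * ψ a) :=
      (div_le_div_iff_of_pos_right (by positivity)).2 h4
    have h6 : (M * ψ b) * ((B / b) * ψ b) / (ψ b * ψ a) = (M * B / b) * (ψ b / ψ a) := by
      field_simp
    have h7 : (M * B / b) * (ψ b / ψ a) ≤ (M * B / b) * 1 :=
      mul_le_mul_of_nonneg_left ((div_le_one hψa).2 hψab)
        (div_nonneg (mul_nonneg hM0 hB) hb.le)
    have h8 : M * B / b ≤ 2 * M * B / b :=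
      (div_le_div_iff_of_pos_right hb).2 (by nlinarith)
    rw [h6] at h5
    rw [mul_one] at h7
    linarith

lemma phiW_diff_tendsto {α : Type*} (ψ x : ℝ → ℝ) (hψ : OmegaInf ψ) (hx : MemMplus ψ x)
    {B : ℝ} (hB : 0 ≤ B) (l : Filter α) (u v : α → ℝ)
    (hu : Tendsto u l atTop) (hv : Tendsto v l atTop)
    (huv : ∀ᶠ s in l, |u s - v s| ≤ B) :
    Tendsto (fun s => phiW ψ x (u s) - phiW ψ x (v s)) l (nhds 0) := by
  rcases dichotomy x with hall | hzero
  · obtain ⟨s₀, hs₀0, hanti⟩ := exists_base x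
    obtain ⟨⟨_, M, hM⟩, _⟩ := hx
    have hM0 : 0 ≤ M := by
      have h1 : 0 ≤ phiW ψ x 1 :=
        div_nonneg (intervalIntegral.integral_nonneg zero_le_one
          fun u _ => decRearr_nonneg x u) (psi_pos hψ one_pos).le
      linarith [hM 1 one_pos]
    have h2MB : 0 ≤ 2 * M * B := by nlinarith
    rw [Metric.tendsto_nhds]
    intro ε hε
    set R := max (max (2 * s₀) 1) (2 * M * B / ε + 1) with hRdef
    have hR1 : (1:ℝ) ≤ R := le_trans (le_max_right _ 1) (le_max_left _ _)
    have hR0 : (0:ℝ) < R := lt_of_lt_of_le one_pos hR1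
    have hRs : 2 * s₀ ≤ R := le_trans (le_max_left _ _) (le_max_left _ _)
    have hkey : 2 * M * B / R < ε := by
      rw [div_lt_iff₀ hR0]
      have hR2 : 2 * M * B / ε + 1 ≤ R := le_max_right _ _
      have heq : ε * (2 * M * B / ε + 1) = 2 * M * B + ε := by
        field_simp
      nlinarith [mul_le_mul_of_nonneg_left hR2 hε.le]
    filter_upwards [hu.eventually_ge_atTop R, hv.eventually_ge_atTop R, huv]
      with s hus hvs hsuv
    rw [Real.dist_eq, sub_zero]
    have habs := abs_le.1 hsuv
    rcases le_total (v s) (u s) with hc | hc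
    · have hb0 : 0 < v s := lt_of_lt_of_le one_pos (le_trans hR1 hvs)
      have hbound := phiW_diff_bound ψ x hψ hall hanti hM hB hb0
        (le_trans hRs hvs) hc (by linarith [habs.2])
      have h2 : 2 * M * B / v s ≤ 2 * M * B / R :=
        (div_le_div_iff₀ hb0 hR0).2 (mul_le_mul_of_nonneg_left hvs h2MB)
      exact lt_of_le_of_lt (hbound.trans h2) hkey
    · have hb0 : 0 < u s := lt_of_lt_of_le one_pos (le_trans hR1 hus)
      have hbound := phiW_diff_bound ψ x hψ hall hanti hM hB hb0
        (le_trans hRs hus) hc (by linarith [habs.1])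
      rw [abs_sub_comm]
      have h2 : 2 * M * B / u s ≤ 2 * M * B / R :=
        (div_le_div_iff₀ hb0 hR0).2 (mul_le_mul_of_nonneg_left hus h2MB)
      exact lt_of_le_of_lt (hbound.trans h2) hkey
  · have hev : ∀ᶠ s in l, (fun s => phiW ψ x (u s) - phiW ψ x (v s)) s = (0:ℝ) := by
      filter_upwards [hu.eventually_gt_atTop 0, hv.eventually_gt_atTop 0] with s hus hvs
      simp only [phiW, hzero _ hus, hzero _ hvs, zero_div, sub_zero]
    exact Tendsto.congr' (Filter.EventuallyEq.symm hev) tendsto_const_nhds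

/-! ### `IsCb` and `IsBddSeq` closure properties -/

lemma isCb_const (c : ℝ) : IsCb fun _ => c :=
  ⟨continuousOn_const, |c|, fun _ _ => le_rfl⟩

lemma IsCb.smulc {f : ℝ → ℝ} (c : ℝ) (hf : IsCb f) : IsCb fun t => c * f t := by
  obtain ⟨hc, M, hM⟩ := hf
  refine ⟨continuousOn_const.mul hc, |c| * M, fun t ht => ?_⟩
  rw [abs_mul]
  exact mul_le_mul_of_nonneg_left (hM t ht) (abs_nonneg c)

lemma IsCb.addf {f g : ℝ → ℝ} (hf : IsCb f) (hg : IsCb g) : IsCb fun t => f t + g t := by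
  obtain ⟨hcf, Mf, hMf⟩ := hf
  obtain ⟨hcg, Mg, hMg⟩ := hg
  exact ⟨hcf.add hcg, Mf + Mg, fun t ht =>
    (abs_add_le _ _).trans (add_le_add (hMf t ht) (hMg t ht))⟩

lemma IsCb.subf {f g : ℝ → ℝ} (hf : IsCb f) (hg : IsCb g) : IsCb fun t => f t - g t := by
  obtain ⟨hcf, Mf, hMf⟩ := hf
  obtain ⟨hcg, Mg, hMg⟩ := hg
  exact ⟨hcf.sub hcg, Mf + Mg, fun t ht =>
    (abs_sub _ _).trans (add_le_add (hMf t ht) (hMg t ht))⟩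

lemma IsCb.shiftf {f : ℝ → ℝ} (hf : IsCb f) {s : ℝ} (hs : 0 ≤ s) :
    IsCb fun t => f (t + s) := by
  obtain ⟨hcf, Mf, hMf⟩ := hf
  refine ⟨hcf.comp ((continuous_id.add continuous_const).continuousOn)
    (fun t ht => add_nonneg (mem_Ici.1 ht) hs), Mf, fun t ht =>
      hMf _ (add_nonneg (mem_Ici.1 ht) hs)⟩

lemma isBddSeq_const (c : ℝ) : IsBddSeq fun _ => c := ⟨|c|, fun _ => le_rfl⟩

lemma IsBddSeq.smulc {a : ℕ → ℝ} (c : ℝ) (ha : IsBddSeq a) : IsBddSeq fun n => c * a n := by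
  obtain ⟨M, hM⟩ := ha
  exact ⟨|c| * M, fun n => by
    rw [abs_mul]; exact mul_le_mul_of_nonneg_left (hM n) (abs_nonneg c)⟩

lemma IsBddSeq.addf {a b : ℕ → ℝ} (ha : IsBddSeq a) (hb : IsBddSeq b) :
    IsBddSeq fun n => a n + b n := by
  obtain ⟨Ma, hMa⟩ := ha
  obtain ⟨Mb, hMb⟩ := hb
  exact ⟨Ma + Mb, fun n => (abs_add_le _ _).trans (add_le_add (hMa n) (hMb n))⟩

lemma IsBddSeq.subf {a b : ℕ → ℝ} (ha : IsBddSeq a) (hb : IsBddSeq b) :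
    IsBddSeq fun n => a n - b n := by
  obtain ⟨Ma, hMa⟩ := ha
  obtain ⟨Mb, hMb⟩ := hb
  exact ⟨Ma + Mb, fun n => (abs_sub _ _).trans (add_le_add (hMa n) (hMb n))⟩

lemma IsBddSeq.shiftk {a : ℕ → ℝ} (ha : IsBddSeq a) (k : ℕ) :
    IsBddSeq fun n => a (n + k) := by
  obtain ⟨M, hM⟩ := ha
  exact ⟨M, fun n => hM (n + k)⟩

/-! ### Banach limit lemmas -/

lemma BLR_const (L : BanachLimitR) (c : ℝ) : L.toFun (fun _ => c) = c := by
  have h := L.map_smul c (fun _ => 1) (isCb_const 1)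
  rw [L.map_one, mul_one] at h
  simpa only [mul_one] using h

lemma BLR_sub (L : BanachLimitR) {f g : ℝ → ℝ} (hf : IsCb f) (hg : IsCb g) :
    L.toFun (fun t => f t - g t) = L.toFun f - L.toFun g := by
  have h1 := L.map_smul (-1) g hg
  have h3 := L.map_add f (fun t => (-1) * g t) hf (hg.smulc (-1))
  rw [h1] at h3
  have he : (fun t => f t + (-1) * g t) = fun t => f t - g t := by
    funext t; ring
  rw [he] at h3
  rw [h3]; ring

lemma BLR_vanish (L : BanachLimitR) {f : ℝ → ℝ} (hf : IsCb f)
    (h0 : Tendsto f atTop (nhds 0)) : L.toFun f = 0 := by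
  have key : ∀ ε > (0:ℝ), |L.toFun f| ≤ ε := by
    intro ε hε
    obtain ⟨s₁, hs₁⟩ := eventually_atTop.1 (Metric.tendsto_nhds.mp h0 ε hε)
    set s₀ := max s₁ 0 with hs₀def
    have hs₀ : 0 ≤ s₀ := le_max_right _ _
    have hbs : ∀ t ∈ Ici (0:ℝ), |f (t + s₀)| ≤ ε := by
      intro t ht
      have h := hs₁ (t + s₀) (le_trans (le_max_left _ _)
        (by linarith [mem_Ici.1 ht]))
      rw [Real.dist_eq, sub_zero] at h
      exact h.le
    have hshift : IsCb fun t => f (t + s₀) := hf.shiftf hs₀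
    have hLs : L.toFun (fun t => f (t + s₀)) = L.toFun f := L.shift_inv f hf s₀ hs₀
    have hub : L.toFun f ≤ ε := by
      have hpos := L.pos (fun t => (fun _ => ε) t - f (t + s₀))
        ((isCb_const ε).subf hshift)
        (fun t ht => by show (0:ℝ) ≤ ε - f (t + s₀); linarith [(abs_le.1 (hbs t ht)).2])
      rw [BLR_sub L (isCb_const ε) hshift, BLR_const, hLs] at hpos
      linarith
    have hlb : -ε ≤ L.toFun f := by
      have hpos := L.pos (fun t => (fun u => f (u + s₀)) t - (fun _ => -ε) t)
        (hshift.subf (isCb_const (-ε)))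
        (fun t ht => by show (0:ℝ) ≤ f (t + s₀) - (-ε); linarith [(abs_le.1 (hbs t ht)).1])
      rw [BLR_sub L hshift (isCb_const (-ε)), BLR_const, hLs] at hpos
      linarith
    rw [abs_le]; exact ⟨hlb, hub⟩
  by_contra hne
  have hp : 0 < |L.toFun f| := abs_pos.2 hne
  linarith [key (|L.toFun f| / 2) (by linarith)]

lemma BLR_eq (L : BanachLimitR) {f g : ℝ → ℝ} (hf : IsCb f) (hg : IsCb g)
    (hfg : Tendsto (fun t => f t - g t) atTop (nhds 0)) : L.toFun f = L.toFun g := by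
  have h := BLR_vanish L (hf.subf hg) hfg
  rw [BLR_sub L hf hg] at h
  linarith

lemma BLN_const (L : BanachLimitN) (c : ℝ) : L.toFun (fun _ => c) = c := by
  have h := L.map_smul c (fun _ => 1) (isBddSeq_const 1)
  rw [L.map_one, mul_one] at h
  simpa only [mul_one] using h

lemma BLN_sub (L : BanachLimitN) {a b : ℕ → ℝ} (ha : IsBddSeq a) (hb : IsBddSeq b) :
    L.toFun (fun n => a n - b n) = L.toFun a - L.toFun b := by
  have h1 := L.map_smul (-1) b hb
  have h3 := L.map_add a (fun n => (-1) * b n) ha (hb.smulc (-1))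
  rw [h1] at h3
  have he : (fun n => a n + (-1) * b n) = fun n => a n - b n := by
    funext n; ring
  rw [he] at h3
  rw [h3]; ring

lemma BLN_shift_k (L : BanachLimitN) {a : ℕ → ℝ} (ha : IsBddSeq a) (k : ℕ) :
    L.toFun (fun n => a (n + k)) = L.toFun a := by
  induction k with
  | zero => simp
  | succ k ih =>
    have h := L.shift_inv (fun n => a (n + k)) (ha.shiftk k)
    have he : (fun n => a (n + 1 + k)) = fun n => a (n + (k + 1)) := by
      funext n; congr 1; omega
    rw [he] at h
    rw [h, ih]

lemma BLN_vanish (L : BanachLimitN) {a : ℕ → ℝ} (ha : IsBddSeq a)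
    (h0 : Tendsto a atTop (nhds 0)) : L.toFun a = 0 := by
  have key : ∀ ε > (0:ℝ), |L.toFun a| ≤ ε := by
    intro ε hε
    obtain ⟨N, hN⟩ := eventually_atTop.1 (Metric.tendsto_nhds.mp h0 ε hε)
    have hbs : ∀ n : ℕ, |a (n + N)| ≤ ε := by
      intro n
      have h := hN (n + N) (Nat.le_add_left _ _)
      rw [Real.dist_eq, sub_zero] at h
      exact h.le
    have hshift : IsBddSeq fun n => a (n + N) := ha.shiftk N
    have hLs : L.toFun (fun n => a (n + N)) = L.toFun a := BLN_shift_k L ha N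
    have hub : L.toFun a ≤ ε := by
      have hpos := L.pos (fun n => (fun _ => ε) n - a (n + N))
        ((isBddSeq_const ε).subf hshift)
        (fun n => by show (0:ℝ) ≤ ε - a (n + N); linarith [(abs_le.1 (hbs n)).2])
      rw [BLN_sub L (isBddSeq_const ε) hshift, BLN_const, hLs] at hpos
      linarith
    have hlb : -ε ≤ L.toFun a := by
      have hpos := L.pos (fun n => (fun m => a (m + N)) n - (fun _ => -ε) n)
        (hshift.subf (isBddSeq_const (-ε)))
        (fun n => by show (0:ℝ) ≤ a (n + N) - (-ε); linarith [(abs_le.1 (hbs n)).1])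
      rw [BLN_sub L hshift (isBddSeq_const (-ε)), BLN_const, hLs] at hpos
      linarith
    rw [abs_le]; exact ⟨hlb, hub⟩
  by_contra hne
  have hp : 0 < |L.toFun a| := abs_pos.2 hne
  linarith [key (|L.toFun a| / 2) (by linarith)]

lemma BLN_eq (L : BanachLimitN) {a b : ℕ → ℝ} (ha : IsBddSeq a) (hb : IsBddSeq b)
    (hab : Tendsto (fun n => a n - b n) atTop (nhds 0)) : L.toFun a = L.toFun b := by
  have h := BLN_vanish L (ha.subf hb) hab
  rw [BLN_sub L ha hb] at h
  linarith

end AuxLemmas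

/-- if `κ₁, κ₂` are increasing, continuous, unbounded and
positive on `(0,∞)` with `κ₁ - κ₂` bounded, then they generate the same
functionals `f_{L,κ}` and `f_{L',κ}` on `M₊(ψ)`. -/
theorem fL_eq_of_sub_bounded (ψ κ₁ κ₂ : ℝ → ℝ) (hψ : OmegaInf ψ)
    (hm₁ : MonotoneOn κ₁ (Ici 0)) (hc₁ : ContinuousOn κ₁ (Ici 0))
    (hu₁ : Tendsto κ₁ atTop atTop) (hp₁ : ∀ t > (0:ℝ), 0 < κ₁ t)
    (hm₂ : MonotoneOn κ₂ (Ici 0)) (hc₂ : ContinuousOn κ₂ (Ici 0))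
    (hu₂ : Tendsto κ₂ atTop atTop) (hp₂ : ∀ t > (0:ℝ), 0 < κ₂ t)
    (hbd : ∃ B : ℝ, ∀ t ≥ (0:ℝ), |κ₁ t - κ₂ t| ≤ B) :
    (∀ L : BanachLimitR, ∀ x : ℝ → ℝ, MemMplus ψ x → fL L ψ κ₁ x = fL L ψ κ₂ x) ∧
    (∀ L' : BanachLimitN, ∀ x : ℝ → ℝ, MemMplus ψ x → fLN L' ψ κ₁ x = fLN L' ψ κ₂ x) := by
  obtain ⟨B, hBb⟩ := hbd
  set B' : ℝ := max B 0 with hB'def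
  have hB'0 : 0 ≤ B' := le_max_right _ _
  have hB' : ∀ t ≥ (0:ℝ), |κ₁ t - κ₂ t| ≤ B' := fun t ht =>
    (hBb t ht).trans (le_max_left _ _)
  constructor
  · intro L x hx
    have hφc := phiW_cont ψ x hψ
    obtain ⟨M, hM0, hMb⟩ := phiW_bounds ψ x hψ hx
    have key : ∀ κ : ℝ → ℝ, ContinuousOn κ (Ici 0) →
        (∀ t > (0:ℝ), 0 < κ t) → IsCb fun t => phiW ψ x (κ (max t 1)) := by
      intro κ hc hp
      constructor
      · have hmaxc : ContinuousOn (fun t : ℝ => κ (max t 1)) (Ici 0) :=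
          hc.comp ((continuous_id.max continuous_const).continuousOn)
            (fun t _ => le_trans zero_le_one (le_max_right t 1))
        exact hφc.comp hmaxc
          (fun t _ => hp _ (lt_of_lt_of_le one_pos (le_max_right t 1)))
      · refine ⟨M, fun t _ => ?_⟩
        have hpos := hp (max t 1) (lt_of_lt_of_le one_pos (le_max_right t 1))
        obtain ⟨h1, h2⟩ := hMb _ hpos
        rw [abs_le]; exact ⟨by linarith, h2⟩
    have hmaxT : Tendsto (fun t : ℝ => max t 1) atTop atTop :=
      tendsto_atTop_mono (fun t => le_max_left t 1) tendsto_id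
    have hdiff := phiW_diff_tendsto ψ x hψ hx hB'0 atTop
      (fun t => κ₁ (max t 1)) (fun t => κ₂ (max t 1))
      (hu₁.comp hmaxT) (hu₂.comp hmaxT)
      (Filter.Eventually.of_forall fun t =>
        hB' _ (le_trans zero_le_one (le_max_right t 1)))
    exact BLR_eq L (key κ₁ hc₁ hp₁) (key κ₂ hc₂ hp₂) hdiff
  · intro L' x hx
    obtain ⟨M, hM0, hMb⟩ := phiW_bounds ψ x hψ hx
    have hbdd : ∀ κ : ℝ → ℝ, (∀ t > (0:ℝ), 0 < κ t) →
        IsBddSeq fun n : ℕ => phiW ψ x (κ n) := by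
      intro κ hp
      refine ⟨max M |phiW ψ x (κ ((0:ℕ):ℝ))|, fun n => ?_⟩
      cases n with
      | zero => exact le_max_right _ _
      | succ n =>
        have hc : (0:ℝ) < ((n+1 : ℕ):ℝ) := by exact_mod_cast Nat.succ_pos n
        obtain ⟨h1, h2⟩ := hMb _ (hp _ hc)
        exact le_trans (abs_le.2 ⟨by linarith, h2⟩) (le_max_left _ _)
    have ha₁ := hbdd κ₁ hp₁
    have ha₂ := hbdd κ₂ hp₂
    have e₁ := L'.shift_inv (fun n : ℕ => phiW ψ x (κ₁ n)) ha₁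
    have e₂ := L'.shift_inv (fun n : ℕ => phiW ψ x (κ₂ n)) ha₂
    have hdiff := phiW_diff_tendsto ψ x hψ hx hB'0 atTop
      (fun n : ℕ => κ₁ (((n+1 : ℕ) : ℝ))) (fun n : ℕ => κ₂ (((n+1 : ℕ) : ℝ)))
      (hu₁.comp (tendsto_natCast_atTop_atTop.comp (tendsto_add_atTop_nat 1)))
      (hu₂.comp (tendsto_natCast_atTop_atTop.comp (tendsto_add_atTop_nat 1)))
      (Filter.Eventually.of_forall fun n => hB' _ (Nat.cast_nonneg _))
    have emid := BLN_eq L' (ha₁.shiftk 1) (ha₂.shiftk 1) hdiff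
    show L'.toFun (fun n : ℕ => phiW ψ x (κ₁ n)) = L'.toFun (fun n : ℕ => phiW ψ x (κ₂ n))
    rw [← e₁, ← e₂]
    exact emid
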